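/- Let −1 ≤ a < b < 1 with a + b ≥ 0, and let v_1, …, v_n be unit vectors in ℝ^d such that ⟨v_i, v_j⟩ ∈ {a, b} for all i ≠ j, with both values a and b occurring as inner products. If n > 2d + 2, then (2 − a − b)/(b − a) is an odd positive integer; that is, there exists an odd integer k ≥ 1 with (2 − a − b)/(b − a) = k. -/

import Mathlib

open Polynomial Matrix

lemma aux_shift {n : ℕ} (M : Matrix (Fin n) (Fin n) ℝ) (t : ℝ) :
    (M - t • 1).charpoly = M.charpoly.comp (X + C t) := by
  have hf : (M - t • 1).charmatrix = (eval₂RingHom C (X + C t)).mapMatrix (M.charmatrix) := by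
    ext i j
    by_cases h : i = j
    · subst h
      simp [Matrix.charmatrix_apply_eq, Matrix.map_apply, Matrix.sub_apply,
        Matrix.smul_apply, Matrix.one_apply]
      ring
    · simp [Matrix.charmatrix_apply_ne _ _ _ h, Matrix.map_apply, Matrix.sub_apply,
        Matrix.smul_apply, Matrix.one_apply_ne h]
  rw [Matrix.charpoly, hf, ← RingHom.map_det]
  simp [Matrix.charpoly, Polynomial.comp, eval₂RingHom]

lemma aux_mulVecLin_charpoly {n : ℕ} (M : Matrix (Fin n) (Fin n) ℝ) :
    (M.mulVecLin).charpoly = M.charpoly := by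
  rw [← Matrix.toLin'_apply']
  have := LinearMap.charpoly_toMatrix (Matrix.toLin' M) (Pi.basisFun ℝ (Fin n))
  rw [← this, LinearMap.toMatrix_eq_toMatrix', LinearMap.toMatrix'_toLin']

lemma aux_minpoly_pow_dvd (x : ℝ) (m : ℕ) :
    ∀ p : ℚ[X], p ≠ 0 → (X - C x) ^ m ∣ p.map (algebraMap ℚ ℝ) → (minpoly ℚ x) ^ m ∣ p := by
  induction m with
  | zero => intro p _ _; simp
  | succ m ih =>
    intro p hp hdvd
    have hpm : p.map (algebraMap ℚ ℝ) ≠ 0 :=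
      (Polynomial.map_ne_zero_iff (algebraMap ℚ ℝ).injective).mpr hp
    have hroot : Polynomial.aeval x p = 0 := by
      have h1 : (X - C x) ∣ p.map (algebraMap ℚ ℝ) :=
        dvd_trans (dvd_pow_self _ (Nat.succ_ne_zero m)) hdvd
      rw [Polynomial.aeval_def, ← Polynomial.eval_map]
      exact (Polynomial.dvd_iff_isRoot.mp h1)
    have hint : IsIntegral ℚ x := (IsAlgebraic.isIntegral ⟨p, hp, hroot⟩)
    set μ := minpoly ℚ x with hμ
    have hμdvd : μ ∣ p := minpoly.dvd ℚ x hroot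
    obtain ⟨q, hq⟩ := hμdvd
    have hμ0 : μ ≠ 0 := minpoly.ne_zero hint
    have hq0 : q ≠ 0 := by rintro rfl; simp [hq] at hp
    have hμsep : (μ.map (algebraMap ℚ ℝ)).Separable :=
      ((minpoly.irreducible hint).separable).map
    have hμm0 : μ.map (algebraMap ℚ ℝ) ≠ 0 :=
      (Polynomial.map_ne_zero_iff (algebraMap ℚ ℝ).injective).mpr hμ0
    have hrm1 : (μ.map (algebraMap ℚ ℝ)).rootMultiplicity x = 1 := by
      refine le_antisymm (Polynomial.rootMultiplicity_le_one_of_separable hμsep x) ?_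
      rw [Nat.one_le_iff_ne_zero, ← Nat.pos_iff_ne_zero,
        Polynomial.rootMultiplicity_pos hμm0]
      rw [Polynomial.IsRoot, Polynomial.eval_map, ← Polynomial.aeval_def]
      exact minpoly.aeval ℚ x
    have hrmp : m + 1 ≤ (p.map (algebraMap ℚ ℝ)).rootMultiplicity x :=
      (Polynomial.le_rootMultiplicity_iff hpm).mpr hdvd
    have hmul : (p.map (algebraMap ℚ ℝ)).rootMultiplicity x
        = 1 + (q.map (algebraMap ℚ ℝ)).rootMultiplicity x := by
      rw [hq, Polynomial.map_mul, Polynomial.rootMultiplicity_mul (by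
        rw [← Polynomial.map_mul, ← hq]; exact hpm), hrm1]
    have hqm : (X - C x) ^ m ∣ q.map (algebraMap ℚ ℝ) := by
      refine dvd_trans (pow_dvd_pow _ ?_) (Polynomial.pow_rootMultiplicity_dvd _ x)
      omega
    have hind := ih q hq0 hqm
    rw [hq, pow_succ, mul_comm (μ ^ m) μ]
    exact mul_dvd_mul_left μ hind

set_option maxHeartbeats 1000000 in
theorem stmt11 (d n : ℕ)
    (a b : ℝ) (ha : -1 ≤ a) (hab : a < b) (hb : b < 1) (hsum : 0 ≤ a + b)
    (v : Fin n → EuclideanSpace ℝ (Fin d))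
    (hunit : ∀ i, ‖v i‖ = 1)
    (hinner : ∀ i j, i ≠ j →
      (inner ℝ (v i) (v j) : ℝ) = a ∨ (inner ℝ (v i) (v j) : ℝ) = b)
    (hocca : ∃ i j, i ≠ j ∧ (inner ℝ (v i) (v j) : ℝ) = a)
    (hoccb : ∃ i j, i ≠ j ∧ (inner ℝ (v i) (v j) : ℝ) = b)
    (hn : 2 * d + 2 < n) :
    ∃ k : ℤ, Odd k ∧ 1 ≤ k ∧ (2 - a - b) / (b - a) = (k : ℝ) := by
  classical
  set lam : ℝ := (1 - b) / (b - a) with hlam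
  have hba : (0:ℝ) < b - a := sub_pos.mpr hab
  have h1b : (0:ℝ) < 1 - b := sub_pos.mpr hb
  have hlampos : 0 < lam := div_pos h1b hba
  -- matrices
  set Az : Matrix (Fin n) (Fin n) ℤ := Matrix.of (fun i j =>
    if i ≠ j ∧ (inner ℝ (v i) (v j) : ℝ) = a then 1 else 0) with hAz
  set Ar : Matrix (Fin n) (Fin n) ℝ := Az.map ⇑(Int.castRingHom ℝ) with hAr
  set J : Matrix (Fin n) (Fin n) ℝ := Matrix.of (fun _ _ => 1) with hJ
  set B : Matrix (Fin d) (Fin n) ℝ := Matrix.of (fun k i => v i k) with hB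
  set G : Matrix (Fin n) (Fin n) ℝ := Bᵀ * B with hG
  have hGij : ∀ i j, G i j = (inner ℝ (v i) (v j) : ℝ) := by
    intro i j
    simp [hG, hB, Matrix.mul_apply, PiLp.inner_apply, RCLike.inner_apply, conj_trivial, mul_comm]
  have hGdiag : ∀ i, G i i = 1 := by
    intro i
    rw [hGij, real_inner_self_eq_norm_mul_norm, hunit i, one_mul]
  have hGdecomp : G = (1 - b) • (1 : Matrix (Fin n) (Fin n) ℝ) + b • J + (a - b) • Ar := by
    ext i j
    by_cases hij : i = j
    · subst hij
      have hA0 : Ar i i = 0 := by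
        rw [hAr, hAz]
        simp only [Matrix.map_apply, Matrix.of_apply,
          if_neg (fun h : i ≠ i ∧ _ => h.1 rfl)]
        norm_num
      rw [hGdiag i]
      simp only [Matrix.add_apply, Matrix.smul_apply, Matrix.one_apply_eq, hJ,
        Matrix.of_apply, hA0, smul_eq_mul]
      ring
    · rcases hinner i j hij with h | h
      · have hA1 : Ar i j = 1 := by
          rw [hAr, hAz]
          simp only [Matrix.map_apply, Matrix.of_apply, if_pos (And.intro hij h)]
          norm_num
        rw [hGij i j, h]
        simp only [Matrix.add_apply, Matrix.smul_apply, Matrix.one_apply_ne hij, hJ,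
          Matrix.of_apply, hA1, smul_eq_mul]
        ring
      · have hne : ¬ (i ≠ j ∧ (inner ℝ (v i) (v j) : ℝ) = a) := by
          rintro ⟨-, h'⟩
          rw [h] at h'
          exact absurd h' (ne_of_gt hab)
        have hA0 : Ar i j = 0 := by
          rw [hAr, hAz]
          simp only [Matrix.map_apply, Matrix.of_apply, if_neg hne]
          norm_num
        rw [hGij i j, h]
        simp only [Matrix.add_apply, Matrix.smul_apply, Matrix.one_apply_ne hij, hJ,
          Matrix.of_apply, hA0, smul_eq_mul]
        ring
  -- rank bounds
  have hrankG : G.rank ≤ d := by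
    rw [hG, Matrix.rank_transpose_mul_self]
    simpa using Matrix.rank_le_card_height B
  have hrankJ : J.rank ≤ 1 := by
    set C1 : Matrix (Fin n) (Fin 1) ℝ := Matrix.of fun _ _ => 1 with hC1
    set R1 : Matrix (Fin 1) (Fin n) ℝ := Matrix.of fun _ _ => 1 with hR1
    have hJf : J = C1 * R1 := by
      ext i j; simp [hJ, hC1, hR1, Matrix.mul_apply]
    rw [hJf]
    have h1 := Matrix.rank_mul_le_left C1 R1
    have h2 : C1.rank ≤ 1 := by simpa using C1.rank_le_card_width
    omega
  -- kernels
  have hfinn : Module.finrank ℝ (Fin n → ℝ) = n := by simp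
  have hkerG : n ≤ Module.finrank ℝ (LinearMap.ker G.mulVecLin) + d := by
    have h1 := LinearMap.finrank_range_add_finrank_ker (G.mulVecLin)
    rw [hfinn] at h1
    have : Module.finrank ℝ (LinearMap.range G.mulVecLin) = G.rank := rfl
    omega
  have hkerJ : n ≤ Module.finrank ℝ (LinearMap.ker J.mulVecLin) + 1 := by
    have h1 := LinearMap.finrank_range_add_finrank_ker (J.mulVecLin)
    rw [hfinn] at h1
    have : Module.finrank ℝ (LinearMap.range J.mulVecLin) = J.rank := rfl
    omega
  set W := LinearMap.ker G.mulVecLin ⊓ LinearMap.ker J.mulVecLin with hW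
  have hWrank : n ≤ Module.finrank ℝ W + d + 1 := by
    have h2 := Submodule.finrank_sup_add_finrank_inf_eq
      (LinearMap.ker G.mulVecLin) (LinearMap.ker J.mulVecLin)
    have h3 := Submodule.finrank_le (LinearMap.ker G.mulVecLin ⊔ LinearMap.ker J.mulVecLin :
      Submodule ℝ (Fin n → ℝ))
    rw [hfinn] at h3
    rw [← hW] at h2
    omega
  -- W is in the eigenspace
  set Mlam : Matrix (Fin n) (Fin n) ℝ := Ar - lam • 1 with hMlam
  have hWle : W ≤ LinearMap.ker Mlam.mulVecLin := by
    intro x hx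
    obtain ⟨hxG, hxJ⟩ := Submodule.mem_inf.mp hx
    rw [LinearMap.mem_ker, Matrix.mulVecLin_apply] at hxG hxJ ⊢
    have hGx0 : G.mulVec x = (1 - b) • x + b • (J.mulVec x) + (a - b) • (Ar.mulVec x) := by
      rw [hGdecomp]
      simp [Matrix.add_mulVec, Matrix.smul_mulVec, Matrix.one_mulVec]
    have hGx : (1 - b) • x + (a - b) • (Ar.mulVec x) = 0 := by
      rw [hxG, hxJ, smul_zero, add_zero] at hGx0
      linear_combination (norm := module) hGx0.symm
    have hab0 : (a - b) ≠ 0 := by linarith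
    have hc : (a - b)⁻¹ * (-(1 - b)) = lam := by
      rw [hlam]
      field_simp
      ring
    have hArx : Ar.mulVec x = lam • x := by
      have h5 : (a - b) • (Ar.mulVec x) = -((1 - b) • x) :=
        eq_neg_of_add_eq_zero_left (by linear_combination (norm := module) hGx)
      calc Ar.mulVec x = (a - b)⁻¹ • ((a - b) • Ar.mulVec x) := by
            rw [smul_smul, inv_mul_cancel₀ hab0, one_smul]
        _ = (a - b)⁻¹ • (-((1 - b) • x)) := by rw [h5]
        _ = ((a - b)⁻¹ * (-(1 - b))) • x := by
            rw [← neg_smul, smul_smul]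
        _ = lam • x := by rw [hc]
    rw [hMlam, Matrix.sub_mulVec, hArx, Matrix.smul_mulVec, Matrix.one_mulVec, sub_self]
  -- multiplicity bound
  set m := Module.finrank ℝ W with hm
  have hmn : n ≤ m + d + 1 := hWrank
  have hkerM : m ≤ Module.finrank ℝ (LinearMap.ker Mlam.mulVecLin) :=
    Submodule.finrank_mono hWle
  have hgen : LinearMap.ker Mlam.mulVecLin ≤
      Module.End.maxGenEigenspace (Mlam.mulVecLin : Module.End ℝ (Fin n → ℝ)) 0 := by
    intro x hx
    rw [Module.End.mem_maxGenEigenspace]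
    refine ⟨1, ?_⟩
    simp only [zero_smul, sub_zero, pow_one]
    exact LinearMap.mem_ker.mp hx
  have htrail : m ≤ (Mlam.mulVecLin : Module.End ℝ (Fin n → ℝ)).charpoly.natTrailingDegree := by
    rw [← LinearMap.finrank_maxGenEigenspace_zero_eq]
    exact le_trans hkerM (Submodule.finrank_mono hgen)
  have hXm : (X : ℝ[X]) ^ m ∣ (Mlam.mulVecLin : Module.End ℝ (Fin n → ℝ)).charpoly := by
    rw [Polynomial.X_pow_dvd_iff]
    intro e he
    exact Polynomial.coeff_eq_zero_of_lt_natTrailingDegree (lt_of_lt_of_le he htrail)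
  rw [aux_mulVecLin_charpoly, hMlam, aux_shift] at hXm
  -- transfer to (X - lam)^m ∣ charpoly Ar
  have hdvdAr : (X - C lam) ^ m ∣ Ar.charpoly := by
    have h7 := map_dvd (eval₂RingHom (C : ℝ →+* ℝ[X]) (X - C lam)) hXm
    simp only [coe_eval₂RingHom, map_pow, eval₂_X] at h7
    have h8 : eval₂ (C : ℝ →+* ℝ[X]) (X - C lam) ((Ar.charpoly).comp (X + C lam))
        = Ar.charpoly := by
      show ((Ar.charpoly).comp (X + C lam)).comp (X - C lam) = Ar.charpoly
      rw [Polynomial.comp_assoc]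
      simp
    rwa [h8] at h7
  -- integer charpoly
  have hcharmap : Ar.charpoly = (Az.charpoly).map (Int.castRingHom ℝ) := by
    rw [hAr]
    exact Matrix.charpoly_map Az (Int.castRingHom ℝ)
  set pz := Az.charpoly with hpz
  have hpzmonic : pz.Monic := Az.charpoly_monic
  have hpzdeg : pz.natDegree = n := by
    rw [hpz]
    simpa using Az.charpoly_natDegree_eq_dim
  set pq := pz.map (Int.castRingHom ℚ) with hpq
  have hpqmonic : pq.Monic := hpzmonic.map _
  have hpq0 : pq ≠ 0 := hpqmonic.ne_zero
  have hpqdeg : pq.natDegree = n := by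
    rw [hpq, Polynomial.natDegree_map_eq_of_injective (Int.castRingHom ℚ).injective_int, hpzdeg]
  have hmapmap : pq.map (algebraMap ℚ ℝ) = pz.map (Int.castRingHom ℝ) := by
    rw [hpq, Polynomial.map_map]
    congr 1
  have hdvdq : (X - C lam) ^ m ∣ pq.map (algebraMap ℚ ℝ) := by
    rw [hmapmap, ← hcharmap]; exact hdvdAr
  have hm1 : 1 ≤ m := by omega
  have hmusq : (minpoly ℚ lam) ^ m ∣ pq := aux_minpoly_pow_dvd lam m pq hpq0 hdvdq
  -- lam is rational
  have hlamroot : Polynomial.aeval lam pq = 0 := by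
    rw [Polynomial.aeval_def, ← Polynomial.eval_map, hmapmap]
    have : (X - C lam) ∣ pz.map (Int.castRingHom ℝ) := by
      rw [← hmapmap]
      exact dvd_trans (dvd_pow_self _ (by omega)) hdvdq
    exact Polynomial.dvd_iff_isRoot.mp this
  have hintq : IsIntegral ℚ lam := IsAlgebraic.isIntegral ⟨pq, hpq0, hlamroot⟩
  have hdegle : m * (minpoly ℚ lam).natDegree ≤ n := by
    have := Polynomial.natDegree_le_of_dvd hmusq hpq0
    rwa [Polynomial.natDegree_pow, hpqdeg] at this
  have hdegpos : 0 < (minpoly ℚ lam).natDegree := minpoly.natDegree_pos hintq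
  have hdeg1 : (minpoly ℚ lam).natDegree = 1 := by
    by_contra hne
    have h2le : 2 ≤ (minpoly ℚ lam).natDegree := by omega
    have : 2 * m ≤ m * (minpoly ℚ lam).natDegree := by
      calc 2 * m = m * 2 := by ring
        _ ≤ m * (minpoly ℚ lam).natDegree := Nat.mul_le_mul_left m h2le
    omega
  obtain ⟨r, hr⟩ := minpoly.natDegree_eq_one_iff.mp hdeg1
  -- lam is an integer
  have hlamintz : IsIntegral ℤ lam := by
    refine ⟨pz, hpzmonic, ?_⟩
    have h10 : Polynomial.aeval lam pz = 0 := by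
      have h9 : pq = pz.map (algebraMap ℤ ℚ) := hpq
      have h11 := hlamroot
      rw [h9, Polynomial.aeval_map_algebraMap] at h11
      exact h11
    rw [← Polynomial.aeval_def]
    exact h10
  have hrint : IsIntegral ℤ r := by
    have h12 := hlamintz
    rw [← hr] at h12
    exact IsIntegral.tower_bot (algebraMap ℚ ℝ).injective h12
  obtain ⟨z, hz⟩ := IsIntegrallyClosed.isIntegral_iff.mp hrint
  have hzlam : (z : ℝ) = lam := by
    rw [← hr, ← hz]
    simp [eq_intCast, map_intCast]
  have hz1 : 1 ≤ z := by
    by_contra hzneg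
    push_neg at hzneg
    have hz0 : z ≤ 0 := by omega
    have hzr : (z:ℝ) ≤ 0 := by exact_mod_cast hz0
    rw [hzlam] at hzr
    linarith
  refine ⟨2 * z + 1, ⟨z, by ring⟩, by omega, ?_⟩
  have : (2 - a - b) / (b - a) = 2 * lam + 1 := by
    rw [hlam]
    field_simp
    ring
  rw [this, ← hzlam]
  push_cast
  ring
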